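/- arXiv:2012.08161 — 5 statements merged into one kernel-verified Lean document; each statement's English description precedes it below -/
import Mathlib

section
/- Let w be an odd prime, q a prime power, and n a positive integer with gcd(n,q)=1 and ord_{rad(n)}(q) = w^2. If v_w(n) = 0 or v_w(n) ≥ v_w(q^{w^2}-1), then gcd(n, q^{w^2}-1) = gcd(n, q-1)·gcd(n, (q^{w^2}-1)/(q-1)) = gcd(n, q^w-1)·gcd(n, (q^{w^2}-1)/(q^w-1)); moreover lcm(q-1, gcd(n, q^{w^2}-1)) = (q-1)·gcd(n, (q^{w^2}-1)/(q-1)) and lcm(q^w-1, gcd(n, q^{w^2}-1)) = (q^w-1)·gcd(n, (q^{w^2}-1)/(q^w-1)). -/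
/-- `rad n` is the product of the distinct prime divisors of `n`. -/
def rad (n : ℕ) : ℕ := ∏ p ∈ n.primeFactors, p

lemma nat_geom (a k : ℕ) (ha : 1 ≤ a) :
    (a - 1) * ∑ i ∈ Finset.range k, a ^ i = a ^ k - 1 := by
  have h1 : 1 ≤ a ^ k := Nat.one_le_pow _ _ ha
  zify [ha, h1]
  push_cast
  linear_combination geom_sum_mul (a : ℤ) k

lemma sum_factorization_zero (p a k : ℕ) (hp : p.Prime) (hpa : p ∣ a - 1) (ha : 1 ≤ a)
    (hpk : ¬ p ∣ k) : (∑ i ∈ Finset.range k, a ^ i).factorization p = 0 := by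
  apply Nat.factorization_eq_zero_of_not_dvd
  intro hdvd
  apply hpk
  have h1 : (a : ZMod p) = 1 := by
    have hmod : 1 ≡ a [MOD p] := (Nat.modEq_iff_dvd' ha).mpr hpa
    have := (ZMod.natCast_eq_natCast_iff 1 a p).mpr hmod
    simpa using this.symm
  have h2 : ((∑ i ∈ Finset.range k, a ^ i : ℕ) : ZMod p) = 0 :=
    (ZMod.natCast_eq_zero_iff _ _).mpr hdvd
  rw [← ZMod.natCast_eq_zero_iff]
  push_cast at h2
  rw [h1] at h2
  simpa using h2

lemma gcd_mul_of_forall (n d m : ℕ) (hn : n ≠ 0) (hd : d ≠ 0) (hm : m ≠ 0)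
    (h : ∀ p : ℕ, p.Prime → p ∣ n →
      d.factorization p = 0 ∨ m.factorization p = 0 ∨
        d.factorization p + m.factorization p ≤ n.factorization p) :
    Nat.gcd n (d * m) = Nat.gcd n d * Nat.gcd n m := by
  have hdm : d * m ≠ 0 := mul_ne_zero hd hm
  have hg1 : Nat.gcd n (d * m) ≠ 0 := Nat.gcd_ne_zero_left hn
  have hg2 : Nat.gcd n d ≠ 0 := Nat.gcd_ne_zero_left hn
  have hg3 : Nat.gcd n m ≠ 0 := Nat.gcd_ne_zero_left hn
  refine Nat.eq_of_factorization_eq hg1 (mul_ne_zero hg2 hg3) fun p => ?_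
  rw [Nat.factorization_gcd hn hdm, Nat.factorization_mul hg2 hg3,
    Nat.factorization_gcd hn hd, Nat.factorization_gcd hn hm, Nat.factorization_mul hd hm]
  simp only [Finsupp.inf_apply, Finsupp.add_apply]
  by_cases hp : p.Prime
  · by_cases hpn : p ∣ n
    · rcases h p hp hpn with h0 | h0 | h0 <;> simp [h0] <;> omega
    · have : n.factorization p = 0 := Nat.factorization_eq_zero_of_not_dvd hpn
      simp [this]
  · have : n.factorization p = 0 := Nat.factorization_eq_zero_of_not_prime n hp
    simp [this]

lemma main_helper (w q n e k : ℕ) (hw : w.Prime) (hq2 : 2 ≤ q) (hn : 0 < n)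
    (he : 1 ≤ e) (hek : e * k = w ^ 2) (hkpow : ∃ j, k = w ^ j)
    (hv : n.factorization w = 0 ∨ (q ^ w ^ 2 - 1).factorization w ≤ n.factorization w) :
    Nat.gcd n (q ^ w ^ 2 - 1)
      = Nat.gcd n (q ^ e - 1) * Nat.gcd n ((q ^ w ^ 2 - 1) / (q ^ e - 1)) ∧
    Nat.lcm (q ^ e - 1) (Nat.gcd n (q ^ w ^ 2 - 1))
      = (q ^ e - 1) * Nat.gcd n ((q ^ w ^ 2 - 1) / (q ^ e - 1)) := by
  have hqe : 2 ≤ q ^ e := le_trans hq2 (Nat.le_self_pow (by omega) q)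
  set d := q ^ e - 1 with hd_def
  set S := ∑ i ∈ Finset.range k, (q ^ e) ^ i with hS_def
  have hdS : d * S = q ^ w ^ 2 - 1 := by
    rw [hd_def, hS_def, nat_geom (q ^ e) k (by omega), ← pow_mul, hek]
  have hd0 : d ≠ 0 := by omega
  have hA0 : q ^ w ^ 2 - 1 ≠ 0 := by
    have : 2 ≤ q ^ w ^ 2 := le_trans hq2 (Nat.le_self_pow (pow_ne_zero 2 hw.pos.ne') q)
    omega
  have hS0 : S ≠ 0 := by
    intro h; rw [h, mul_zero] at hdS; exact hA0 hdS.symm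
  have hdiv : (q ^ w ^ 2 - 1) / d = S := by
    rw [← hdS, Nat.mul_div_cancel_left _ (Nat.pos_of_ne_zero hd0)]
  rw [hdiv, ← hdS]
  have hgcd : Nat.gcd n (d * S) = Nat.gcd n d * Nat.gcd n S := by
    apply gcd_mul_of_forall n d S hn.ne' hd0 hS0
    intro p hp hpn
    by_cases hpw : p = w
    · refine Or.inr (Or.inr ?_)
      have h1 : (d * S).factorization p = d.factorization p + S.factorization p := by
        rw [Nat.factorization_mul hd0 hS0]; rfl
      have h2 : 0 < n.factorization w :=
        hw.factorization_pos_of_dvd hn.ne' (hpw ▸ hpn)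
      rw [hdS] at h1
      subst hpw
      omega
    · by_cases hpd : p ∣ d
      · refine Or.inr (Or.inl ?_)
        apply sum_factorization_zero p (q ^ e) k hp hpd (by omega)
        intro hpk
        obtain ⟨j, rfl⟩ := hkpow
        exact hpw ((Nat.prime_dvd_prime_iff_eq hp hw).mp (hp.dvd_of_dvd_pow hpk))
      · exact Or.inl (Nat.factorization_eq_zero_of_not_dvd hpd)
  refine ⟨hgcd, ?_⟩
  have hgd : Nat.gcd d (Nat.gcd n (d * S)) = Nat.gcd n d := by
    have hdvd : Nat.gcd d n ∣ d * S := (Nat.gcd_dvd_left d n).trans (dvd_mul_right d S)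
    rw [← Nat.gcd_assoc, Nat.gcd_eq_left hdvd, Nat.gcd_comm]
  have hml := Nat.gcd_mul_lcm d (Nat.gcd n (d * S))
  rw [hgd] at hml
  have hpos : 0 < Nat.gcd n d := Nat.gcd_pos_of_pos_left d hn
  apply Nat.eq_of_mul_eq_mul_left hpos
  rw [hml, hgcd]; ring

/-- Let `w` be an odd prime, `q` a prime power, and `n` a positive integer with
`gcd(n,q) = 1` and `ord_{rad(n)}(q) = w²`. If `v_w(n) = 0` or `v_w(n) ≥ v_w(q^{w²}−1)`,
then `gcd(n, q^{w²}−1) = gcd(n, q−1)·gcd(n, (q^{w²}−1)/(q−1))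
= gcd(n, q^w−1)·gcd(n, (q^{w²}−1)/(q^w−1))`; moreover
`lcm(q−1, gcd(n, q^{w²}−1)) = (q−1)·gcd(n, (q^{w²}−1)/(q−1))` and
`lcm(q^w−1, gcd(n, q^{w²}−1)) = (q^w−1)·gcd(n, (q^{w²}−1)/(q^w−1))`. -/
theorem gcd_lcm_identities_case_zero_or_large (w q n : ℕ) (hw : w.Prime) (hwodd : Odd w)
    (hq : IsPrimePow q) (hn : 0 < n) (hcop : Nat.gcd n q = 1)
    (hord : orderOf (q : ZMod (rad n)) = w ^ 2)
    (hv : n.factorization w = 0 ∨ (q ^ w ^ 2 - 1).factorization w ≤ n.factorization w) :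
    Nat.gcd n (q ^ w ^ 2 - 1)
        = Nat.gcd n (q - 1) * Nat.gcd n ((q ^ w ^ 2 - 1) / (q - 1)) ∧
    Nat.gcd n (q ^ w ^ 2 - 1)
        = Nat.gcd n (q ^ w - 1) * Nat.gcd n ((q ^ w ^ 2 - 1) / (q ^ w - 1)) ∧
    Nat.lcm (q - 1) (Nat.gcd n (q ^ w ^ 2 - 1))
        = (q - 1) * Nat.gcd n ((q ^ w ^ 2 - 1) / (q - 1)) ∧
    Nat.lcm (q ^ w - 1) (Nat.gcd n (q ^ w ^ 2 - 1))
        = (q ^ w - 1) * Nat.gcd n ((q ^ w ^ 2 - 1) / (q ^ w - 1)) := by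
  have hq2 : 2 ≤ q := hq.two_le
  have h1 := main_helper w q n 1 (w ^ 2) hw hq2 hn le_rfl (one_mul _) ⟨2, rfl⟩ hv
  have h2 := main_helper w q n w w hw hq2 hn hw.one_lt.le (sq w).symm ⟨1, (pow_one w).symm⟩ hv
  rw [pow_one] at h1
  exact ⟨h1.1, h2.1, h1.2, h2.2⟩
end

section
/- Let w be an odd prime, q a prime power, and n a positive integer with gcd(n,q)=1 and ord_{rad(n)}(q) = w^2. If 1 = v_w(n) < v_w(q^{w^2}-1), then gcd(n, q^{w^2}-1) = gcd(n/w, q-1)·gcd(n, (q^{w^2}-1)/(q-1)) = gcd(n/w, q^w-1)·gcd(n, (q^{w^2}-1)/(q^w-1)); moreover lcm(q-1, gcd(n, q^{w^2}-1)) = ((q-1)/w)·gcd(n, (q^{w^2}-1)/(q-1)) and lcm(q^w-1, gcd(n, q^{w^2}-1)) = ((q^w-1)/w)·gcd(n, (q^{w^2}-1)/(q^w-1)). -/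
lemma val_pow_sub_one {p x m : ℕ} (hx : 2 ≤ x) (hxp : p ∣ x - 1)
    (hm : ¬ p ∣ m) (hm0 : 0 < m) :
    (x ^ m - 1).factorization p = (x - 1).factorization p := by
  have h1 : (1:ℕ) ≤ x := by omega
  have h2 : (1:ℕ) ≤ x ^ m := Nat.one_le_pow _ _ (by omega)
  have hfac : (∑ i ∈ Finset.range m, x ^ i) * (x - 1) = x ^ m - 1 := by
    zify [h1, h2]
    exact geom_sum_mul _ _
  have hS0 : (∑ i ∈ Finset.range m, x ^ i) ≠ 0 := by
    have : 0 < ∑ i ∈ Finset.range m, x ^ i :=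
      Finset.sum_pos (fun i _ => pow_pos (by omega) i) (Finset.nonempty_range_iff.mpr hm0.ne')
    omega
  have hSp : ¬ p ∣ (∑ i ∈ Finset.range m, x ^ i) := by
    intro hdvd
    apply hm
    have hx1 : ((x : ℕ) : ZMod p) = 1 := by
      have h : (1:ℕ) ≡ x [MOD p] := (Nat.modEq_iff_dvd' h1).mpr hxp
      have := (ZMod.natCast_eq_natCast_iff 1 x p).mpr h
      simpa using this.symm
    have hz : ((∑ i ∈ Finset.range m, x ^ i : ℕ) : ZMod p) = 0 :=
      (ZMod.natCast_eq_zero_iff _ p).mpr hdvd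
    rw [Nat.cast_sum] at hz
    simp only [Nat.cast_pow, hx1, one_pow, Finset.sum_const, Finset.card_range,
      nsmul_eq_mul, smul_eq_mul, mul_one] at hz
    exact (ZMod.natCast_eq_zero_iff m p).mp hz
  rw [← hfac, Nat.factorization_mul hS0 (by omega : x - 1 ≠ 0)]
  simp [Nat.factorization_eq_zero_of_not_dvd hSp]


/-- Let `w` be an odd prime, `q` a prime power, and `n` a positive integer with
`gcd(n,q) = 1` and `ord_{rad(n)}(q) = w²`. If `1 = v_w(n) < v_w(q^{w²}−1)`, then
`gcd(n, q^{w²}−1) = gcd(n/w, q−1)·gcd(n, (q^{w²}−1)/(q−1))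
= gcd(n/w, q^w−1)·gcd(n, (q^{w²}−1)/(q^w−1))`; moreover
`lcm(q−1, gcd(n, q^{w²}−1)) = ((q−1)/w)·gcd(n, (q^{w²}−1)/(q−1))` and
`lcm(q^w−1, gcd(n, q^{w²}−1)) = ((q^w−1)/w)·gcd(n, (q^{w²}−1)/(q^w−1))`. -/
theorem gcd_lcm_identities_case_one (w q n : ℕ) (hw : w.Prime) (hwodd : Odd w)
    (hq : IsPrimePow q) (hn : 0 < n) (hcop : Nat.gcd n q = 1)
    (hord : orderOf (q : ZMod (rad n)) = w ^ 2)
    (hv1 : n.factorization w = 1)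
    (hv2 : 1 < (q ^ w ^ 2 - 1).factorization w) :
    Nat.gcd n (q ^ w ^ 2 - 1)
        = Nat.gcd (n / w) (q - 1) * Nat.gcd n ((q ^ w ^ 2 - 1) / (q - 1)) ∧
    Nat.gcd n (q ^ w ^ 2 - 1)
        = Nat.gcd (n / w) (q ^ w - 1) * Nat.gcd n ((q ^ w ^ 2 - 1) / (q ^ w - 1)) ∧
    Nat.lcm (q - 1) (Nat.gcd n (q ^ w ^ 2 - 1))
        = ((q - 1) / w) * Nat.gcd n ((q ^ w ^ 2 - 1) / (q - 1)) ∧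
    Nat.lcm (q ^ w - 1) (Nat.gcd n (q ^ w ^ 2 - 1))
        = ((q ^ w - 1) / w) * Nat.gcd n ((q ^ w ^ 2 - 1) / (q ^ w - 1)) := by
  haveI : Fact w.Prime := ⟨hw⟩
  have hq2 : 2 ≤ q := hq.two_le
  have hw2 : 2 ≤ w := hw.two_le
  have hqw2 : 2 ≤ q ^ w := le_trans hq2 (Nat.le_self_pow hw.pos.ne' q)
  have hqww2 : 2 ≤ q ^ w ^ 2 := le_trans hq2 (Nat.le_self_pow (by positivity) q)
  have hD0 : q ^ w ^ 2 - 1 ≠ 0 := by omega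
  have hM1 : q - 1 ≠ 0 := by omega
  have hMw : q ^ w - 1 ≠ 0 := by omega
  -- divisibilities
  have hd1w : q - 1 ∣ q ^ w - 1 := by
    simpa using Nat.sub_dvd_pow_sub_pow q 1 w
  have hd1D : q - 1 ∣ q ^ w ^ 2 - 1 := by
    simpa using Nat.sub_dvd_pow_sub_pow q 1 (w ^ 2)
  have hdwD : q ^ w - 1 ∣ q ^ w ^ 2 - 1 := by
    have := Nat.sub_dvd_pow_sub_pow (q ^ w) 1 w
    simpa [← pow_mul, ← pow_two] using this
  have hwn : w ∣ n := Nat.dvd_of_factorization_pos (by rw [hv1]; exact one_ne_zero)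
  have hnw0 : n / w ≠ 0 := (Nat.div_pos (Nat.le_of_dvd hn hwn) hw.pos).ne'
  have hwq : ¬ w ∣ q := by
    intro h
    have h1 : w ∣ Nat.gcd n q := Nat.dvd_gcd hwn h
    rw [hcop] at h1
    exact hw.one_lt.ne' (Nat.dvd_one.mp h1)
  -- rad n divides q^{w^2} - 1
  have hradD : rad n ∣ q ^ w ^ 2 - 1 := by
    have h1 : (q : ZMod (rad n)) ^ w ^ 2 = 1 := by rw [← hord]; exact pow_orderOf_eq_one _
    have h2 : ((q ^ w ^ 2 : ℕ) : ZMod (rad n)) = ((1 : ℕ) : ZMod (rad n)) := by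
      push_cast; rw [h1]
    have h3 : (1 : ℕ) ≡ q ^ w ^ 2 [MOD rad n] := ((ZMod.natCast_eq_natCast_iff _ _ _).mp h2).symm
    exact (Nat.modEq_iff_dvd' (by omega)).mp h3
  have hwrad : w ∣ rad n := by
    unfold rad
    exact Finset.dvd_prod_of_mem _ (Nat.mem_primeFactors.mpr ⟨hw, hwn, hn.ne'⟩)
  have hwD : w ∣ q ^ w ^ 2 - 1 := hwrad.trans hradD
  -- w divides q - 1
  have hwq1 : w ∣ q - 1 := by
    have h3 : (1 : ℕ) ≡ q ^ w ^ 2 [MOD w] :=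
      (Nat.modEq_iff_dvd' (by omega)).mpr hwD
    have h2 : ((q : ℕ) : ZMod w) ^ w ^ 2 = 1 := by
      have := (ZMod.natCast_eq_natCast_iff _ _ _).mpr h3.symm
      push_cast at this
      exact this
    have hc : ((q : ℕ) : ZMod w) ^ w ^ 2 = ((q : ℕ) : ZMod w) := by
      rw [pow_two, pow_mul, ZMod.pow_card, ZMod.pow_card]
    have h4 : ((q : ℕ) : ZMod w) = ((1 : ℕ) : ZMod w) := by
      rw [← hc, h2]; simp
    have h5 : (1 : ℕ) ≡ q [MOD w] := ((ZMod.natCast_eq_natCast_iff _ _ _).mp h4).symm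
    exact (Nat.modEq_iff_dvd' (by omega)).mp h5
  have hww : w ∣ q ^ w - 1 := hwq1.trans hd1w
  -- valuations at w
  have hW2 : (q ^ w - 1).factorization w = (q - 1).factorization w + 1 := by
    rw [Nat.factorization_def _ hw, Nat.factorization_def _ hw]
    have := padicValNat.pow_sub_pow (p := w) hwodd (x := q) (y := 1)
      (by omega) (by simpa using hwq1) (by simpa using hwq) (n := w) hw.pos.ne'
    simpa [padicValNat.self hw.one_lt] using this
  have hW3 : (q ^ w ^ 2 - 1).factorization w = (q - 1).factorization w + 2 := by
    rw [Nat.factorization_def _ hw, Nat.factorization_def _ hw]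
    have := padicValNat.pow_sub_pow (p := w) hwodd (x := q) (y := 1)
      (by omega) (by simpa using hwq1) (by simpa using hwq) (n := w ^ 2) (by positivity)
    simpa [padicValNat.prime_pow] using this
  -- key local identities at primes p ≠ w
  have hA : ∀ p : ℕ, p.Prime → p ≠ w → p ∣ q - 1 →
      (q ^ w ^ 2 - 1).factorization p = (q - 1).factorization p := by
    intro p hp hpw hpd
    exact val_pow_sub_one hq2 hpd
      (fun h => hpw ((Nat.prime_dvd_prime_iff_eq hp hw).mp (hp.dvd_of_dvd_pow h)))
      (by positivity)
  have hB : ∀ p : ℕ, p.Prime → p ≠ w → p ∣ q ^ w - 1 →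
      (q ^ w ^ 2 - 1).factorization p = (q ^ w - 1).factorization p := by
    intro p hp hpw hpd
    have := val_pow_sub_one (x := q ^ w) (m := w) hqw2 hpd
      (fun h => hpw ((Nat.prime_dvd_prime_iff_eq hp hw).mp h)) hw.pos
    rwa [← pow_mul, ← pow_two] at this
  -- the uniform helper
  have key : ∀ M : ℕ, M ≠ 0 → M ∣ q ^ w ^ 2 - 1 → w ∣ M →
      (∀ p : ℕ, p.Prime → p ≠ w → p ∣ M →
        (q ^ w ^ 2 - 1).factorization p = M.factorization p) →
      M.factorization w < (q ^ w ^ 2 - 1).factorization w →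
      (Nat.gcd n (q ^ w ^ 2 - 1) = Nat.gcd (n / w) M * Nat.gcd n ((q ^ w ^ 2 - 1) / M)
      ∧ Nat.lcm M (Nat.gcd n (q ^ w ^ 2 - 1)) = (M / w) * Nat.gcd n ((q ^ w ^ 2 - 1) / M)) := by
    intro M hM0 hMD hwM hMloc hMlt
    have hDM0 : (q ^ w ^ 2 - 1) / M ≠ 0 :=
      (Nat.div_pos (Nat.le_of_dvd (by omega) hMD) (Nat.pos_of_ne_zero hM0)).ne'
    have hMw0 : M / w ≠ 0 :=
      (Nat.div_pos (Nat.le_of_dvd (Nat.pos_of_ne_zero hM0) hwM) hw.pos).ne'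
    have hg1 : Nat.gcd n (q ^ w ^ 2 - 1) ≠ 0 := Nat.gcd_ne_zero_left hn.ne'
    have hg2 : Nat.gcd (n / w) M ≠ 0 := Nat.gcd_ne_zero_left hnw0
    have hg3 : Nat.gcd n ((q ^ w ^ 2 - 1) / M) ≠ 0 := Nat.gcd_ne_zero_left hn.ne'
    have hMvw : 1 ≤ M.factorization w := hw.factorization_pos_of_dvd hM0 hwM
    constructor
    · rw [Nat.eq_iff_prime_padicValNat_eq _ _ hg1 (mul_ne_zero hg2 hg3)]
      intro p hp
      rw [← Nat.factorization_def _ hp, ← Nat.factorization_def _ hp]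
      rw [Nat.factorization_gcd hn.ne' hD0, Nat.factorization_mul hg2 hg3, Finsupp.add_apply,
        Nat.factorization_gcd hnw0 hM0, Nat.factorization_gcd hn.ne' hDM0,
        Finsupp.inf_apply, Finsupp.inf_apply, Finsupp.inf_apply,
        Nat.factorization_div hMD, Nat.factorization_div hwn,
        hw.factorization, Finsupp.tsub_apply, Finsupp.tsub_apply, Finsupp.single_apply]
      rcases eq_or_ne p w with rfl | hpw
      · simp only [eq_self_iff_true, if_true]
        omega
      · simp only [if_neg (Ne.symm hpw)]
        rcases em (p ∣ M) with hpm | hpm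
        · have := hMloc p hp hpw hpm
          omega
        · have : M.factorization p = 0 := Nat.factorization_eq_zero_of_not_dvd hpm
          omega
    · rw [Nat.eq_iff_prime_padicValNat_eq _ _ (Nat.lcm_ne_zero hM0 hg1)
        (mul_ne_zero hMw0 hg3)]
      intro p hp
      rw [← Nat.factorization_def _ hp, ← Nat.factorization_def _ hp]
      rw [Nat.factorization_lcm hM0 hg1, Finsupp.sup_apply,
        Nat.factorization_gcd hn.ne' hD0, Finsupp.inf_apply,
        Nat.factorization_mul hMw0 hg3, Finsupp.add_apply,
        Nat.factorization_div hwM, Nat.factorization_gcd hn.ne' hDM0, Finsupp.inf_apply,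
        Nat.factorization_div hMD,
        hw.factorization, Finsupp.tsub_apply, Finsupp.tsub_apply, Finsupp.single_apply]
      rcases eq_or_ne p w with rfl | hpw
      · simp only [eq_self_iff_true, if_true]
        omega
      · simp only [if_neg (Ne.symm hpw)]
        rcases em (p ∣ M) with hpm | hpm
        · have := hMloc p hp hpw hpm
          omega
        · have : M.factorization p = 0 := Nat.factorization_eq_zero_of_not_dvd hpm
          omega
  obtain ⟨k1, k3⟩ := key (q - 1) hM1 hd1D hwq1 hA (by omega)
  obtain ⟨k2, k4⟩ := key (q ^ w - 1) hMw hdwD hww hB (by omega)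
  exact ⟨k1, k2, k3, k4⟩
end

section
/- Let q be a prime power and n a positive integer with gcd(n,q) = 1 and ord_{rad(n)}(q) = 4. Let b ∈ {0, 1, 2} be such that gcd(n, q−1, (q^4−1)/(q−1)) = 2^b. Then: (1) gcd(n, q^4−1) = gcd(n, q−1)·gcd(n, (q^4−1)/(q−1)) if v_2(n) ≥ v_2(q^4−1) or b = 0; gcd(n, q^4−1) = gcd(n, q−1)·gcd(n/2, (q^4−1)/(q−1)) if v_2(n) < v_2(q^4−1) and b = 1; and gcd(n, q^4−1) = gcd(n/4, q−1)·gcd(n, (q^4−1)/(q−1)) if v_2(n) < v_2(q^4−1) and b = 2. (2) gcd(n, q^4−1) = gcd(n, q^2−1)·gcd(n, (q^4−1)/(q^2−1)) if v_2(n) ≥ v_2(q^4−1) or b = 0; and gcd(n, q^4−1) = gcd(n/2, q^2−1)·gcd(n, (q^4−1)/(q^2−1)) if v_2(n) < v_2(q^4−1) and b ≠ 0. -/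
private lemma gcd_ne_zero_left' {x : ℕ} (y : ℕ) (hx : x ≠ 0) : Nat.gcd x y ≠ 0 :=
  (Nat.gcd_pos_of_pos_left y (Nat.pos_of_ne_zero hx)).ne'

private lemma gcd_split {n A B u v : ℕ} (hn : n ≠ 0) (hA : A ≠ 0) (hB : B ≠ 0)
    (hu : u ≠ 0) (hv : v ≠ 0)
    (h : ∀ p, p.Prime →
      min (n.factorization p) (A.factorization p + B.factorization p)
        = min (u.factorization p) (A.factorization p)
          + min (v.factorization p) (B.factorization p)) :
    Nat.gcd n (A * B) = Nat.gcd u A * Nat.gcd v B := by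
  have hAB : A * B ≠ 0 := mul_ne_zero hA hB
  have g1 : Nat.gcd n (A * B) ≠ 0 := gcd_ne_zero_left' _ hn
  have g2 : Nat.gcd u A ≠ 0 := gcd_ne_zero_left' _ hu
  have g3 : Nat.gcd v B ≠ 0 := gcd_ne_zero_left' _ hv
  apply Nat.eq_of_factorization_eq g1 (mul_ne_zero g2 g3)
  intro p
  by_cases hp : p.Prime
  · rw [Nat.factorization_gcd hn hAB, Nat.factorization_mul g2 g3,
      Nat.factorization_gcd hu hA, Nat.factorization_gcd hv hB, Nat.factorization_mul hA hB]
    simp only [Finsupp.inf_apply, Finsupp.add_apply]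
    exact h p hp
  · simp [Nat.factorization_eq_zero_of_not_prime _ hp]

private lemma v2_two_mul_odd {m : ℕ} (hm : ¬ 2 ∣ m) : (2 * m).factorization 2 = 1 := by
  have hm0 : m ≠ 0 := by rintro rfl; exact hm ⟨0, rfl⟩
  rw [Nat.factorization_mul two_ne_zero hm0]
  simp [Nat.Prime.factorization_self Nat.prime_two,
    Nat.factorization_eq_zero_of_not_dvd hm]

private lemma prime_odd_not_both {p x y : ℕ} (hp : p.Prime) (hp2 : p ≠ 2)
    (hxy : x + 2 = y) (hx : p ∣ x) (hy : p ∣ y) : False := by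
  have hd : p ∣ 2 := by
    have := Nat.dvd_sub hy hx
    simpa [show y - x = 2 from by omega] using this
  have h2 := hp.two_le
  have hle := Nat.le_of_dvd (by norm_num) hd
  omega

/-- Let `q` be a prime power and `n` a positive integer with `gcd(n,q) = 1` and
`ord_{rad(n)}(q) = 4`. Let `b ∈ {0,1,2}` with `gcd(n, q−1, (q⁴−1)/(q−1)) = 2^b`. Then:
(1) `gcd(n, q⁴−1) = gcd(n, q−1)·gcd(n, (q⁴−1)/(q−1))` if `v₂(n) ≥ v₂(q⁴−1)` or `b = 0`;
`gcd(n, q⁴−1) = gcd(n, q−1)·gcd(n/2, (q⁴−1)/(q−1))` if `v₂(n) < v₂(q⁴−1)` and `b = 1`;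
`gcd(n, q⁴−1) = gcd(n/4, q−1)·gcd(n, (q⁴−1)/(q−1))` if `v₂(n) < v₂(q⁴−1)` and `b = 2`.
(2) `gcd(n, q⁴−1) = gcd(n, q²−1)·gcd(n, (q⁴−1)/(q²−1))` if `v₂(n) ≥ v₂(q⁴−1)` or `b = 0`;
`gcd(n, q⁴−1) = gcd(n/2, q²−1)·gcd(n, (q⁴−1)/(q²−1))` if `v₂(n) < v₂(q⁴−1)` and `b ≠ 0`. -/
theorem gcd_identities_order_four (q n b : ℕ) (hq : IsPrimePow q) (hn : 0 < n)
    (hcop : Nat.gcd n q = 1) (hord : orderOf (q : ZMod (rad n)) = 4)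
    (hb : b ≤ 2)
    (hgcd : Nat.gcd (Nat.gcd n (q - 1)) ((q ^ 4 - 1) / (q - 1)) = 2 ^ b) :
    ((q ^ 4 - 1).factorization 2 ≤ n.factorization 2 ∨ b = 0 →
      Nat.gcd n (q ^ 4 - 1)
        = Nat.gcd n (q - 1) * Nat.gcd n ((q ^ 4 - 1) / (q - 1))) ∧
    (n.factorization 2 < (q ^ 4 - 1).factorization 2 ∧ b = 1 →
      Nat.gcd n (q ^ 4 - 1)
        = Nat.gcd n (q - 1) * Nat.gcd (n / 2) ((q ^ 4 - 1) / (q - 1))) ∧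
    (n.factorization 2 < (q ^ 4 - 1).factorization 2 ∧ b = 2 →
      Nat.gcd n (q ^ 4 - 1)
        = Nat.gcd (n / 4) (q - 1) * Nat.gcd n ((q ^ 4 - 1) / (q - 1))) ∧
    ((q ^ 4 - 1).factorization 2 ≤ n.factorization 2 ∨ b = 0 →
      Nat.gcd n (q ^ 4 - 1)
        = Nat.gcd n (q ^ 2 - 1) * Nat.gcd n ((q ^ 4 - 1) / (q ^ 2 - 1))) ∧
    (n.factorization 2 < (q ^ 4 - 1).factorization 2 ∧ b ≠ 0 →
      Nat.gcd n (q ^ 4 - 1)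
        = Nat.gcd (n / 2) (q ^ 2 - 1) * Nat.gcd n ((q ^ 4 - 1) / (q ^ 2 - 1))) := by
  clear hcop hord hb
  have hq2 : 2 ≤ q := hq.two_le
  have hn0 : n ≠ 0 := hn.ne'
  have hA0 : q - 1 ≠ 0 := by omega
  have he0 : q + 1 ≠ 0 := by omega
  have hs0 : q ^ 2 + 1 ≠ 0 := by positivity
  have hq21 : 1 ≤ q ^ 2 := Nat.one_le_pow _ _ (by omega)
  have hq41 : 1 ≤ q ^ 4 := Nat.one_le_pow _ _ (by omega)
  have hfac1 : q ^ 4 - 1 = (q - 1) * ((q + 1) * (q ^ 2 + 1)) := by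
    zify [hq41, show (1:ℕ) ≤ q from by omega]
    ring
  have hfac2 : q ^ 4 - 1 = ((q - 1) * (q + 1)) * (q ^ 2 + 1) := by
    rw [hfac1]; ring
  have hA2 : q ^ 2 - 1 = (q - 1) * (q + 1) := by
    zify [hq21, show (1:ℕ) ≤ q from by omega]
    ring
  have hB : (q ^ 4 - 1) / (q - 1) = (q + 1) * (q ^ 2 + 1) := by
    rw [hfac1, Nat.mul_div_cancel_left _ (by omega : 0 < q - 1)]
  have hB2 : (q ^ 4 - 1) / (q ^ 2 - 1) = q ^ 2 + 1 := by
    rw [hfac2, hA2, Nat.mul_div_cancel_left _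
      (by positivity : 0 < (q - 1) * (q + 1))]
  have hB1f : ((q + 1) * (q ^ 2 + 1)).factorization 2
      = (q + 1).factorization 2 + (q ^ 2 + 1).factorization 2 := by
    rw [Nat.factorization_mul he0 hs0]; simp
  have haef : ((q - 1) * (q + 1)).factorization 2
      = (q - 1).factorization 2 + (q + 1).factorization 2 := by
    rw [Nat.factorization_mul hA0 he0]; simp
  have hfq : (q ^ 4 - 1).factorization 2
      = (q - 1).factorization 2
        + ((q + 1).factorization 2 + (q ^ 2 + 1).factorization 2) := by
    rw [hfac1, Nat.factorization_mul hA0 (mul_ne_zero he0 hs0)]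
    simp [hB1f]
  -- parity facts about the 2-adic valuations
  have hfacts : ((q - 1).factorization 2 = 0 ∧ (q + 1).factorization 2 = 0 ∧
        (q ^ 2 + 1).factorization 2 = 0) ∨
      (1 ≤ (q - 1).factorization 2 ∧ 1 ≤ (q + 1).factorization 2 ∧
        (q ^ 2 + 1).factorization 2 = 1 ∧
        ((q - 1).factorization 2 = 1 ∨ (q + 1).factorization 2 = 1)) := by
    by_cases h2q : 2 ∣ q
    · left
      have h1 : ¬ 2 ∣ q - 1 := by omega
      have h2 : ¬ 2 ∣ q + 1 := by omega
      have h3 : ¬ 2 ∣ q ^ 2 + 1 := by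
        have : 2 ∣ q ^ 2 := dvd_pow h2q two_ne_zero
        omega
      exact ⟨Nat.factorization_eq_zero_of_not_dvd h1,
        Nat.factorization_eq_zero_of_not_dvd h2,
        Nat.factorization_eq_zero_of_not_dvd h3⟩
    · right
      obtain ⟨j, hj⟩ : ∃ j, q = 2 * j + 1 := ⟨q / 2, by omega⟩
      have ha1 : 1 ≤ (q - 1).factorization 2 :=
        Nat.Prime.factorization_pos_of_dvd Nat.prime_two hA0 (by omega)
      have he1 : 1 ≤ (q + 1).factorization 2 :=
        Nat.Prime.factorization_pos_of_dvd Nat.prime_two he0 (by omega)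
      have hs1 : (q ^ 2 + 1).factorization 2 = 1 := by
        rw [show q ^ 2 + 1 = 2 * (2 * j ^ 2 + 2 * j + 1) from by subst hj; ring]
        exact v2_two_mul_odd (by omega)
      refine ⟨ha1, he1, hs1, ?_⟩
      rcases Nat.even_or_odd j with ⟨i, hi⟩ | ⟨i, hi⟩
      · right
        rw [show q + 1 = 2 * (2 * i + 1) from by omega]
        exact v2_two_mul_odd (by omega)
      · left
        rw [show q - 1 = 2 * (2 * i + 1) from by omega]
        exact v2_two_mul_odd (by omega)
  -- translate hgcd into a statement about 2-adic valuations
  have hb2 : min (min (n.factorization 2) ((q - 1).factorization 2))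
      ((q + 1).factorization 2 + (q ^ 2 + 1).factorization 2) = b := by
    have h0 : Nat.gcd n (q - 1) ≠ 0 := gcd_ne_zero_left' _ hn0
    have := congrArg (fun x : ℕ => x.factorization 2) hgcd
    simp only [hB] at this
    rw [Nat.factorization_gcd h0 (mul_ne_zero he0 hs0),
      Nat.factorization_gcd hn0 hA0] at this
    simpa [Finsupp.inf_apply, hB1f, Nat.Prime.factorization_pow Nat.prime_two]
      using this
  -- odd-prime vanishing facts
  have hodd1 : ∀ p, p.Prime → p ≠ 2 →
      (q - 1).factorization p = 0 ∨ ((q + 1) * (q ^ 2 + 1)).factorization p = 0 := by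
    intro p hp hp2
    by_contra hcon
    push_neg at hcon
    have hd1 : p ∣ q - 1 := Nat.dvd_of_factorization_pos hcon.1
    have hd2 : p ∣ (q + 1) * (q ^ 2 + 1) := Nat.dvd_of_factorization_pos hcon.2
    rcases (Nat.Prime.dvd_mul hp).mp hd2 with h | h
    · exact prime_odd_not_both hp hp2 (by omega : (q - 1) + 2 = q + 1) hd1 h
    · have hd3 : p ∣ q ^ 2 - 1 := by
        have hdvd : q - 1 ∣ q ^ 2 - 1 := by
          simpa using Nat.sub_dvd_pow_sub_pow q 1 2
        exact hd1.trans hdvd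
      exact prime_odd_not_both hp hp2
        (by omega : (q ^ 2 - 1) + 2 = q ^ 2 + 1) hd3 h
  have hodd2 : ∀ p, p.Prime → p ≠ 2 →
      ((q - 1) * (q + 1)).factorization p = 0 ∨ (q ^ 2 + 1).factorization p = 0 := by
    intro p hp hp2
    by_contra hcon
    push_neg at hcon
    have hd1 : p ∣ (q - 1) * (q + 1) := Nat.dvd_of_factorization_pos hcon.1
    have hd2 : p ∣ q ^ 2 + 1 := Nat.dvd_of_factorization_pos hcon.2
    rw [← hA2] at hd1
    exact prime_odd_not_both hp hp2
      (by omega : (q ^ 2 - 1) + 2 = q ^ 2 + 1) hd1 hd2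
  -- valuations of n/2 and n/4
  have hdiv2 : 2 ∣ n → ∀ p,
      n.factorization p = (2 : ℕ).factorization p + (n / 2).factorization p := by
    intro hk p
    have h0 : n / 2 ≠ 0 := by omega
    conv_lhs => rw [← Nat.mul_div_cancel' hk]
    rw [Nat.factorization_mul two_ne_zero h0]
    simp
  have hdiv4 : 4 ∣ n → ∀ p,
      n.factorization p = (4 : ℕ).factorization p + (n / 4).factorization p := by
    intro hk p
    have h0 : n / 4 ≠ 0 := by omega
    conv_lhs => rw [← Nat.mul_div_cancel' hk]
    rw [Nat.factorization_mul (by norm_num) h0]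
    simp
  have f2 : (2 : ℕ).factorization 2 = 1 := Nat.Prime.factorization_self Nat.prime_two
  have f4 : (4 : ℕ).factorization 2 = 2 := by
    rw [show (4 : ℕ) = 2 ^ 2 from by norm_num,
      Nat.Prime.factorization_pow Nat.prime_two]
    simp
  have f2o : ∀ p, p.Prime → p ≠ 2 → (2 : ℕ).factorization p = 0 := by
    intro p hp hp2
    refine Nat.factorization_eq_zero_of_not_dvd fun hd => hp2 ?_
    have := hp.two_le
    have := Nat.le_of_dvd (by norm_num) hd
    omega
  have f4o : ∀ p, p.Prime → p ≠ 2 → (4 : ℕ).factorization p = 0 := by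
    intro p hp hp2
    refine Nat.factorization_eq_zero_of_not_dvd fun hd => hp2 ?_
    rw [show (4 : ℕ) = 2 ^ 2 from by norm_num] at hd
    have := Nat.le_of_dvd (by norm_num) (hp.dvd_of_dvd_pow hd)
    have := hp.two_le
    omega
  refine ⟨?_, ?_, ?_, ?_, ?_⟩
  -- (1a)
  · intro h
    rw [hB, hfac1]
    refine gcd_split hn0 hA0 (mul_ne_zero he0 hs0) hn0 hn0 ?_
    intro p hp
    by_cases hp2 : p = 2
    · subst hp2; omega
    · rcases hodd1 p hp hp2 with h0 | h0 <;> omega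
  -- (1b)
  · rintro ⟨hlt, rfl⟩
    have ht1 : 1 ≤ n.factorization 2 := by omega
    have h2n : 2 ∣ n := by
      simpa using (Nat.Prime.pow_dvd_iff_le_factorization Nat.prime_two hn0).mpr
        (show 1 ≤ n.factorization 2 from ht1)
    have hn2 : n / 2 ≠ 0 := by omega
    rw [hB, hfac1]
    refine gcd_split hn0 hA0 (mul_ne_zero he0 hs0) hn0 hn2 ?_
    intro p hp
    have hdp := hdiv2 h2n p
    by_cases hp2 : p = 2
    · subst hp2; omega
    · have h2p := f2o p hp hp2
      rcases hodd1 p hp hp2 with h0 | h0 <;> omega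
  -- (1c)
  · rintro ⟨hlt, rfl⟩
    have ht2 : 2 ≤ n.factorization 2 := by omega
    have h4n : 4 ∣ n := by
      have := (Nat.Prime.pow_dvd_iff_le_factorization Nat.prime_two hn0).mpr ht2
      simpa [show (2:ℕ) ^ 2 = 4 from by norm_num] using this
    have hn4 : n / 4 ≠ 0 := by omega
    rw [hB, hfac1]
    refine gcd_split hn0 hA0 (mul_ne_zero he0 hs0) hn4 hn0 ?_
    intro p hp
    have hdp := hdiv4 h4n p
    by_cases hp2 : p = 2
    · subst hp2; omega
    · have h4p := f4o p hp hp2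
      rcases hodd1 p hp hp2 with h0 | h0 <;> omega
  -- (2a)
  · intro h
    rw [hB2, hfac2, hA2]
    refine gcd_split hn0 (mul_ne_zero hA0 he0) hs0 hn0 hn0 ?_
    intro p hp
    by_cases hp2 : p = 2
    · subst hp2; omega
    · rcases hodd2 p hp hp2 with h0 | h0 <;> omega
  -- (2b)
  · rintro ⟨hlt, hbne⟩
    have ht1 : 1 ≤ n.factorization 2 := by omega
    have h2n : 2 ∣ n := by
      simpa using (Nat.Prime.pow_dvd_iff_le_factorization Nat.prime_two hn0).mpr ht1
    have hn2 : n / 2 ≠ 0 := by omega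
    rw [hB2, hfac2, hA2]
    refine gcd_split hn0 (mul_ne_zero hA0 he0) hs0 hn2 hn0 ?_
    intro p hp
    have hdp := hdiv2 h2n p
    by_cases hp2 : p = 2
    · subst hp2; omega
    · have h2p := f2o p hp hp2
      rcases hodd2 p hp hp2 with h0 | h0 <;> omega
end

section
/- Let w_1 and w_2 be two distinct odd primes, q a prime power, and n a positive integer with gcd(n,q) = 1 and ord_{rad(n)}(q) = w_1·w_2. If (v_{w_1}(n) = 0 or v_{w_1}(n) ≥ v_{w_1}(q^{w_1 w_2}−1)) and (v_{w_2}(n) = 0 or v_{w_2}(n) ≥ v_{w_2}(q^{w_1 w_2}−1)), then gcd(n, q^{w_1 w_2}−1) = gcd(n, q−1)·gcd(n, (q^{w_1 w_2}−1)/(q−1)) = gcd(n, q^{w_1}−1)·gcd(n, (q^{w_1 w_2}−1)/(q^{w_1}−1)) = gcd(n, q^{w_2}−1)·gcd(n, (q^{w_1 w_2}−1)/(q^{w_2}−1)). -/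
section GcdAux
open Finset

-- geometric identity in ℕ
lemma geom_nat (q m : ℕ) (hq : 1 ≤ q) :
    q ^ m - 1 = (q - 1) * ∑ i ∈ range m, q ^ i := by
  have h1 : 1 ≤ q ^ m := Nat.one_le_pow _ _ hq
  have := geom_sum_mul (x := (q : ℤ)) m
  have h2 : ((q:ℤ) - 1) * ∑ i ∈ range m, (q:ℤ) ^ i = (q:ℤ) ^ m - 1 := by
    rw [mul_comm]; exact this
  zify [hq, h1]
  push_cast at h2 ⊢
  linarith [h2]

-- v₂ of q^m - 1 for odd m, odd q
lemma v2_pow_sub_one (q m : ℕ) (hq : 2 ≤ q) (hqodd : Odd q) (hm : Odd m) :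
    (q ^ m - 1).factorization 2 = (q - 1).factorization 2 := by
  have hS : Odd (∑ i ∈ range m, q ^ i) := by
    rw [Nat.odd_iff]
    rw [Finset.sum_nat_mod]
    have : ∀ i ∈ range m, q ^ i % 2 = 1 := by
      intro i _
      simp [Nat.pow_mod, Nat.odd_iff.mp hqodd]
    rw [Finset.sum_congr rfl this]
    simpa using Nat.odd_iff.mp hm
  have hS0 : (∑ i ∈ range m, q ^ i) ≠ 0 := by
    rintro h; rw [h] at hS; simp [Nat.odd_iff] at hS
  rw [geom_nat q m (by omega), Nat.factorization_mul (by omega) hS0]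
  have : (∑ i ∈ range m, q ^ i).factorization 2 = 0 :=
    Nat.factorization_eq_zero_of_not_dvd (by
      rw [Nat.two_dvd_ne_zero, ← Nat.odd_iff]; exact hS)
  simp [this]

-- membership in ZMod
lemma dvd_pow_sub_one_iff {p q : ℕ} (k : ℕ) (hp : p.Prime) (hq : 1 ≤ q) :
    p ∣ q ^ k - 1 ↔ (q : ZMod p) ^ k = 1 := by
  haveI : NeZero p := ⟨hp.pos.ne'⟩
  have h1 : 1 ≤ q ^ k := Nat.one_le_pow _ _ hq
  rw [← ZMod.natCast_eq_zero_iff, Nat.cast_sub h1]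
  push_cast
  rw [sub_eq_zero]

-- LTE wrapper
lemma lte_wrapper {p q a : ℕ} (b : ℕ) (hp : p.Prime) (hpodd : Odd p)
    (hq : 2 ≤ q) (ha : a ≠ 0) (hb : b ≠ 0) (hpa : p ∣ q ^ a - 1) :
    (q ^ (a * b) - 1).factorization p
      = (q ^ a - 1).factorization p + b.factorization p := by
  haveI : Fact p.Prime := ⟨hp⟩
  have hx : ¬ p ∣ q ^ a := by
    intro h
    have := (Nat.dvd_sub h hpa)
    rw [Nat.sub_sub_self (Nat.one_le_pow _ _ (by omega))] at this
    exact hp.one_lt.ne' (Nat.dvd_one.mp this)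
  have hyx : (1 : ℕ) < q ^ a := Nat.one_lt_pow ha (by omega)
  have := padicValNat.pow_sub_pow (p := p) hpodd (x := q ^ a) (y := 1) hyx
      (by simpa using hpa) hx (n := b) hb
  simp only [one_pow, ← pow_mul] at this
  rw [Nat.factorization_def _ hp, Nat.factorization_def _ hp, Nat.factorization_def _ hp]
  exact this

-- core: valuations agree along divisibility towers avoiding p
lemma core_val_eq {p q s t : ℕ} (hp : p.Prime) (hq : 2 ≤ q) (hs : s ≠ 0)
    (hst : s ∣ t) (htodd : Odd t) (hpt : ¬ p ∣ t) (hpd : p ∣ q ^ s - 1) :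
    (q ^ t - 1).factorization p = (q ^ s - 1).factorization p := by
  have ht : t ≠ 0 := by rintro rfl; simp [Nat.odd_iff] at htodd
  rcases hp.eq_two_or_odd' with rfl | hpodd
  · -- p = 2 : q must be odd
    have hqodd : Odd q := by
      by_contra h
      rw [Nat.not_odd_iff_even] at h
      have : ¬ (2 ∣ q ^ s - 1) := by
        have h1 : 2 ∣ q ^ s := dvd_pow h.two_dvd hs
        have h2 : 1 ≤ q ^ s := Nat.one_le_pow _ _ (by omega)
        rintro ⟨c, hc⟩
        obtain ⟨d, hd⟩ := h1
        omega
      exact this hpd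
    rw [v2_pow_sub_one q t hq hqodd htodd,
      v2_pow_sub_one q s hq hqodd (htodd.of_dvd_nat hst)]
  · -- odd p : LTE
    haveI : Fact p.Prime := ⟨hp⟩
    set a := orderOf ((q : ZMod p)) with ha_def
    have h1 : (q : ZMod p) ^ s = 1 := (dvd_pow_sub_one_iff s hp (by omega)).mp hpd
    have has : a ∣ s := orderOf_dvd_of_pow_eq_one h1
    have ha0 : a ≠ 0 := by
      rintro h; rw [h] at has; exact hs (Nat.eq_zero_of_zero_dvd has)
    have hpa : p ∣ q ^ a - 1 :=
      (dvd_pow_sub_one_iff a hp (by omega)).mpr (pow_orderOf_eq_one _)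
    have hat : a ∣ t := dvd_trans has hst
    obtain ⟨k₁, hk₁⟩ := has
    obtain ⟨k₂, hk₂⟩ := hat
    have hk₁0 : k₁ ≠ 0 := by rintro rfl; simp at hk₁; omega
    have hk₂0 : k₂ ≠ 0 := by rintro rfl; simp at hk₂; omega
    have hz₁ : k₁.factorization p = 0 := by
      apply Nat.factorization_eq_zero_of_not_dvd
      intro h
      exact hpt (hst.elim fun c hc => by
        rw [hc, hk₁, mul_assoc]; exact Dvd.dvd.mul_left (h.mul_right c) a)
    have hz₂ : k₂.factorization p = 0 := by
      apply Nat.factorization_eq_zero_of_not_dvd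
      intro h
      exact hpt (hk₂ ▸ (Dvd.dvd.mul_left h a : p ∣ a * k₂))
    rw [hk₁, hk₂, lte_wrapper k₁ hp hpodd hq ha0 hk₁0 hpa,
      lte_wrapper k₂ hp hpodd hq ha0 hk₂0 hpa, hz₁, hz₂]

-- key gcd-splitting lemma
lemma key_gcd (n d M : ℕ) (hn : n ≠ 0) (hM : M ≠ 0) (hdM : d ∣ M)
    (h : ∀ p : ℕ, p.Prime → d.factorization p = 0 ∨
        M.factorization p = d.factorization p ∨ n.factorization p = 0 ∨
        M.factorization p ≤ n.factorization p) :
    Nat.gcd n M = Nat.gcd n d * Nat.gcd n (M / d) := by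
  have hd0 : d ≠ 0 := by rintro rfl; simp at hdM; exact hM hdM
  have hMd0 : M / d ≠ 0 := by
    have := Nat.div_pos (Nat.le_of_dvd (Nat.pos_of_ne_zero hM) hdM) (Nat.pos_of_ne_zero hd0)
    omega
  have g1 : Nat.gcd n M ≠ 0 := fun h => hn (Nat.eq_zero_of_gcd_eq_zero_left h)
  have g2 : Nat.gcd n d ≠ 0 := fun h => hn (Nat.eq_zero_of_gcd_eq_zero_left h)
  have g3 : Nat.gcd n (M / d) ≠ 0 := fun h => hn (Nat.eq_zero_of_gcd_eq_zero_left h)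
  apply Nat.eq_of_factorization_eq g1 (by positivity) -- fix
  intro p
  by_cases hp : p.Prime
  · rw [Nat.factorization_mul g2 g3, Nat.factorization_gcd hn hM,
      Nat.factorization_gcd hn hd0, Nat.factorization_gcd hn hMd0,
      Nat.factorization_div hdM]
    simp only [Finsupp.inf_apply, Finsupp.add_apply, Finsupp.tsub_apply]
    have hle : d.factorization p ≤ M.factorization p :=
      (Nat.factorization_le_iff_dvd hd0 hM).mpr hdM p
    rcases h p hp with h' | h' | h' | h' <;> omega
  · simp [Nat.factorization_eq_zero_of_not_prime _ hp]

end GcdAux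

/-- Let `w₁, w₂` be two distinct odd primes, `q` a prime power, and `n` a positive
integer with `gcd(n,q) = 1` and `ord_{rad(n)}(q) = w₁w₂`. If
(`v_{w₁}(n) = 0` or `v_{w₁}(n) ≥ v_{w₁}(q^{w₁w₂}−1)`) and
(`v_{w₂}(n) = 0` or `v_{w₂}(n) ≥ v_{w₂}(q^{w₁w₂}−1)`), then
`gcd(n, q^{w₁w₂}−1) = gcd(n, q−1)·gcd(n, (q^{w₁w₂}−1)/(q−1))
= gcd(n, q^{w₁}−1)·gcd(n, (q^{w₁w₂}−1)/(q^{w₁}−1))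
= gcd(n, q^{w₂}−1)·gcd(n, (q^{w₁w₂}−1)/(q^{w₂}−1))`. -/
theorem gcd_identities_two_primes_case_one (w₁ w₂ q n : ℕ)
    (hw₁ : w₁.Prime) (hw₁odd : Odd w₁) (hw₂ : w₂.Prime) (hw₂odd : Odd w₂)
    (hne : w₁ ≠ w₂) (hq : IsPrimePow q) (hn : 0 < n) (hcop : Nat.gcd n q = 1)
    (hord : orderOf (q : ZMod (rad n)) = w₁ * w₂)
    (hv₁ : n.factorization w₁ = 0 ∨
      (q ^ (w₁ * w₂) - 1).factorization w₁ ≤ n.factorization w₁)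
    (hv₂ : n.factorization w₂ = 0 ∨
      (q ^ (w₁ * w₂) - 1).factorization w₂ ≤ n.factorization w₂) :
    Nat.gcd n (q ^ (w₁ * w₂) - 1)
        = Nat.gcd n (q - 1) * Nat.gcd n ((q ^ (w₁ * w₂) - 1) / (q - 1)) ∧
    Nat.gcd n (q ^ (w₁ * w₂) - 1)
        = Nat.gcd n (q ^ w₁ - 1) * Nat.gcd n ((q ^ (w₁ * w₂) - 1) / (q ^ w₁ - 1)) ∧
    Nat.gcd n (q ^ (w₁ * w₂) - 1)
        = Nat.gcd n (q ^ w₂ - 1) * Nat.gcd n ((q ^ (w₁ * w₂) - 1) / (q ^ w₂ - 1)) := by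
  have hq2 : 2 ≤ q := hq.two_le
  have htodd : Odd (w₁ * w₂) := hw₁odd.mul hw₂odd
  have ht0 : w₁ * w₂ ≠ 0 := Nat.mul_ne_zero hw₁.pos.ne' hw₂.pos.ne'
  have hM0 : q ^ (w₁ * w₂) - 1 ≠ 0 := by
    have : 1 < q ^ (w₁ * w₂) := Nat.one_lt_pow ht0 (by omega)
    omega
  -- the uniform per-divisor statement
  have main : ∀ s : ℕ, s ≠ 0 → s ∣ w₁ * w₂ →
      Nat.gcd n (q ^ (w₁ * w₂) - 1)
        = Nat.gcd n (q ^ s - 1) * Nat.gcd n ((q ^ (w₁ * w₂) - 1) / (q ^ s - 1)) := by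
    intro s hs hst
    apply key_gcd n (q ^ s - 1) _ hn.ne' hM0
    · obtain ⟨c, hc⟩ := hst
      rw [hc, pow_mul]
      simpa using Nat.sub_dvd_pow_sub_pow (q ^ s) 1 c
    · intro p hp
      by_cases hpn : p ∣ n
      swap
      · exact Or.inr (Or.inr (Or.inl (Nat.factorization_eq_zero_of_not_dvd hpn)))
      by_cases hpd : p ∣ q ^ s - 1
      swap
      · exact Or.inl (Nat.factorization_eq_zero_of_not_dvd hpd)
      by_cases hpw : p = w₁ ∨ p = w₂
      · refine Or.inr (Or.inr (Or.inr ?_))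
        have hfn : n.factorization p ≠ 0 :=
          (hp.factorization_pos_of_dvd hn.ne' hpn).ne'
        rcases hpw with rfl | rfl
        · rcases hv₁ with h | h
          · exact absurd h hfn
          · exact h
        · rcases hv₂ with h | h
          · exact absurd h hfn
          · exact h
      · refine Or.inr (Or.inl ?_)
        push_neg at hpw
        apply core_val_eq hp hq2 hs hst htodd _ hpd
        intro h
        rcases (Nat.Prime.dvd_mul hp).mp h with h' | h'
        · exact hpw.1 ((Nat.prime_dvd_prime_iff_eq hp hw₁).mp h')
        · exact hpw.2 ((Nat.prime_dvd_prime_iff_eq hp hw₂).mp h')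
  refine ⟨?_, main w₁ hw₁.pos.ne' ⟨w₂, rfl⟩, main w₂ hw₂.pos.ne' ⟨w₁, (mul_comm w₁ w₂)⟩⟩
  simpa using main 1 one_ne_zero (one_dvd _)
end

section
/- Let w_1 and w_2 be two distinct odd primes, q a prime power, and n a positive integer with gcd(n,q) = 1 and ord_{rad(n)}(q) = w_1·w_2. If 1 ≤ v_{w_1}(n) < v_{w_1}(q^{w_1 w_2}−1) and 1 ≤ v_{w_2}(n) < v_{w_2}(q^{w_1 w_2}−1), then gcd(n, q^{w_1 w_2}−1) = gcd(n/(w_1 w_2), q−1)·gcd(n, (q^{w_1 w_2}−1)/(q−1)) = gcd(n/w_2, q^{w_1}−1)·gcd(n, (q^{w_1 w_2}−1)/(q^{w_1}−1)) = gcd(n/w_1, q^{w_2}−1)·gcd(n, (q^{w_1 w_2}−1)/(q^{w_2}−1)). -/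
open Finset

/-- emultiplicity equals factorization for primes and nonzero naturals. -/
private lemma fact_emult {p n : ℕ} (hp : p.Prime) (hn : n ≠ 0) :
    emultiplicity p n = (n.factorization p : ℕ∞) := by
  haveI : Fact p.Prime := ⟨hp⟩
  rw [Nat.factorization_def n hp, padicValNat_eq_emultiplicity hn]

/-- If `p ∣ r - 1` and `p ∤ m` then `v_p(r^m - 1) = v_p(r-1)`. -/
private lemma geom_fact {r m p : ℕ} (hr : 2 ≤ r) (hp : p.Prime) (hpr : p ∣ r - 1)
    (hpm : ¬ p ∣ m) : (r ^ m - 1).factorization p = (r - 1).factorization p := by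
  have hm0 : m ≠ 0 := by rintro rfl; exact hpm (dvd_zero p)
  have h1m : 1 ≤ r ^ m := Nat.one_le_pow _ _ (by omega)
  have hS : r ^ m - 1 = (r - 1) * ∑ i ∈ range m, r ^ i := by
    zify [h1m, show 1 ≤ r by omega]
    linarith [geom_sum_mul (r : ℤ) m]
  obtain ⟨k, hk⟩ := hpr
  have hrk : r = p * k + 1 := by omega
  have hScast : ((∑ i ∈ range m, r ^ i : ℕ) : ZMod p) = (m : ZMod p) := by
    push_cast
    have hr1 : (r : ZMod p) = 1 := by rw [hrk]; push_cast; simp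
    simp [hr1]
  have hpS : ¬ p ∣ ∑ i ∈ range m, r ^ i := by
    intro hd
    have h0 : ((∑ i ∈ range m, r ^ i : ℕ) : ZMod p) = 0 :=
      (ZMod.natCast_eq_zero_iff _ _).mpr hd
    rw [hScast] at h0
    exact hpm ((ZMod.natCast_eq_zero_iff _ _).mp h0)
  have hSne : (∑ i ∈ range m, r ^ i) ≠ 0 := fun h => hpS (h ▸ dvd_zero p)
  rw [hS, Nat.factorization_mul (by omega) hSne]
  simp [Nat.factorization_eq_zero_of_not_dvd hpS]

/-- LTE single step: `p` odd prime, `p ∣ r - 1` gives `v_p(r^p - 1) = v_p(r-1) + 1`. -/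
private lemma lte_step {r p : ℕ} (hr : 2 ≤ r) (hp : p.Prime) (hp2 : Odd p)
    (hpr : p ∣ r - 1) : (r ^ p - 1).factorization p = (r - 1).factorization p + 1 := by
  have hx : ¬ p ∣ r := by
    intro h
    have h1 : p ∣ r - (r - 1) := Nat.dvd_sub h hpr
    rw [show r - (r - 1) = 1 by omega] at h1
    exact hp.one_lt.ne' (Nat.dvd_one.mp h1)
  have key := Nat.emultiplicity_pow_sub_pow hp hp2 (x := r) (y := 1)
    (by simpa using hpr) hx p
  simp only [one_pow] at key
  have hQne : r ^ p - 1 ≠ 0 := by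
    have h1 : r ^ 1 ≤ r ^ p := Nat.pow_le_pow_right (by omega) hp.one_lt.le
    rw [pow_one] at h1; omega
  have hpp : emultiplicity p p = 1 := by
    rw [fact_emult hp hp.ne_zero, hp.factorization_self]
    norm_num
  rw [fact_emult hp hQne, fact_emult hp (by omega : r - 1 ≠ 0), hpp] at key
  exact_mod_cast key

/-- Per-prime gcd splitting lemma. -/
private lemma key_lemma (r m n : ℕ) (hr : 2 ≤ r) (hn : n ≠ 0) (hm : m ∣ n)
    (hmsq : ∀ p : ℕ, p.Prime → p ∣ m → m.factorization p = 1)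
    (hv : ∀ p : ℕ, p.Prime → p ∣ m → n.factorization p < (r ^ m - 1).factorization p)
    (hLTE : ∀ p : ℕ, p.Prime → p ∣ r - 1 →
      (r ^ m - 1).factorization p = (r - 1).factorization p + m.factorization p) :
    Nat.gcd n (r ^ m - 1)
      = Nat.gcd (n / m) (r - 1) * Nat.gcd n ((r ^ m - 1) / (r - 1)) := by
  have hm0 : m ≠ 0 := by rintro rfl; rw [Nat.zero_dvd] at hm; exact hn hm
  have hQ1 : r ^ 1 ≤ r ^ m := Nat.pow_le_pow_right (by omega) (by omega)
  have hQne : r ^ m - 1 ≠ 0 := by rw [pow_one] at hQ1; omega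
  have hDne : r - 1 ≠ 0 := by omega
  have hdvdQ : r - 1 ∣ r ^ m - 1 := by
    simpa using Nat.sub_dvd_pow_sub_pow r 1 m
  have hnm : n / m ≠ 0 :=
    (Nat.div_pos (Nat.le_of_dvd (Nat.pos_of_ne_zero hn) hm) (Nat.pos_of_ne_zero hm0)).ne'
  have hQDne : (r ^ m - 1) / (r - 1) ≠ 0 :=
    (Nat.div_pos (Nat.le_of_dvd (Nat.pos_of_ne_zero hQne) hdvdQ)
      (Nat.pos_of_ne_zero hDne)).ne'
  have hL : Nat.gcd n (r ^ m - 1) ≠ 0 := Nat.gcd_ne_zero_left hn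
  have hR1 : Nat.gcd (n / m) (r - 1) ≠ 0 := Nat.gcd_ne_zero_left hnm
  have hR2 : Nat.gcd n ((r ^ m - 1) / (r - 1)) ≠ 0 := Nat.gcd_ne_zero_left hn
  apply Nat.eq_of_factorization_eq hL (mul_ne_zero hR1 hR2)
  intro p
  by_cases hp : p.Prime
  · rw [Nat.factorization_mul hR1 hR2, Finsupp.add_apply,
      Nat.factorization_gcd hn hQne, Nat.factorization_gcd hnm hDne,
      Nat.factorization_gcd hn hQDne, Finsupp.inf_apply, Finsupp.inf_apply,
      Finsupp.inf_apply, Nat.factorization_div hm, Nat.factorization_div hdvdQ,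
      Finsupp.tsub_apply, Finsupp.tsub_apply]
    have hble : (r - 1).factorization p ≤ (r ^ m - 1).factorization p :=
      (Nat.factorization_le_iff_dvd hDne hQne).mpr hdvdQ p
    have hmle : m.factorization p ≤ n.factorization p :=
      (Nat.factorization_le_iff_dvd hm0 hn).mpr hm p
    rcases Nat.eq_zero_or_pos ((r - 1).factorization p) with hb | hb
    · omega
    · have hpD : p ∣ r - 1 := Nat.dvd_of_factorization_pos hb.ne'
      have hA := hLTE p hp hpD
      rcases Nat.eq_zero_or_pos (m.factorization p) with hμ | hμ
      · omega
      · have hpm : p ∣ m := Nat.dvd_of_factorization_pos hμ.ne'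
        have h1 := hmsq p hp hpm
        have h2 := hv p hp hpm
        have h3 : 0 < n.factorization p :=
          hp.factorization_pos_of_dvd hn (hpm.trans hm)
        omega
  · simp [Nat.factorization_eq_zero_of_not_prime _ hp]

private lemma fact_pp {w₁ w₂ : ℕ} (h1 : w₁.Prime) (h2 : w₂.Prime) (hne : w₁ ≠ w₂) :
    (w₁ * w₂).factorization w₁ = 1 := by
  rw [Nat.factorization_mul h1.pos.ne' h2.pos.ne', Finsupp.add_apply,
    h1.factorization_self,
    Nat.factorization_eq_zero_of_not_dvd
      (fun h => hne ((Nat.prime_dvd_prime_iff_eq h1 h2).mp h))]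

/-- LTE for a single odd prime exponent. -/
private lemma lte_prime {r w : ℕ} (hr : 2 ≤ r) (hw : w.Prime) (hw2 : Odd w) :
    ∀ p : ℕ, p.Prime → p ∣ r - 1 →
      (r ^ w - 1).factorization p = (r - 1).factorization p + w.factorization p := by
  intro p hp hpr
  by_cases h : p = w
  · subst h
    rw [lte_step hr hp hw2 hpr, hp.factorization_self]
  · rw [geom_fact hr hp hpr (fun hd => h ((Nat.prime_dvd_prime_iff_eq hp hw).mp hd)),
      Nat.factorization_eq_zero_of_not_dvd
        (fun hd => h ((Nat.prime_dvd_prime_iff_eq hp hw).mp hd))]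
    omega

/-- LTE for the product of two distinct odd primes as exponent. -/
private lemma lte_two {r w₁ w₂ : ℕ} (hr : 2 ≤ r) (h1 : w₁.Prime) (h1o : Odd w₁)
    (h2 : w₂.Prime) (h2o : Odd w₂) (hne : w₁ ≠ w₂) :
    ∀ p : ℕ, p.Prime → p ∣ r - 1 →
      (r ^ (w₁ * w₂) - 1).factorization p
        = (r - 1).factorization p + (w₁ * w₂).factorization p := by
  intro p hp hpr
  have hr1 : 2 ≤ r ^ w₁ := le_trans hr (Nat.le_self_pow h1.pos.ne' r)
  have hr2 : 2 ≤ r ^ w₂ := le_trans hr (Nat.le_self_pow h2.pos.ne' r)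
  have hd1 : r - 1 ∣ r ^ w₁ - 1 := by simpa using Nat.sub_dvd_pow_sub_pow r 1 w₁
  have hd2 : r - 1 ∣ r ^ w₂ - 1 := by simpa using Nat.sub_dvd_pow_sub_pow r 1 w₂
  by_cases e1 : p = w₁
  · rw [e1] at hpr
    have hpw2 : ¬ w₁ ∣ w₂ := fun h => hne ((Nat.prime_dvd_prime_iff_eq h1 h2).mp h)
    rw [e1, mul_comm w₁ w₂, pow_mul, lte_step hr2 h1 h1o (hpr.trans hd2),
      geom_fact hr h1 hpr hpw2, mul_comm w₂ w₁, fact_pp h1 h2 hne]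
  · by_cases e2 : p = w₂
    · rw [e2] at hpr
      have hpw1 : ¬ w₂ ∣ w₁ := fun h => (hne ((Nat.prime_dvd_prime_iff_eq h2 h1).mp h).symm)
      rw [e2, pow_mul, lte_step hr1 h2 h2o (hpr.trans hd1),
        geom_fact hr h2 hpr hpw1, mul_comm w₁ w₂, fact_pp h2 h1 (Ne.symm hne)]
    · have hpm : ¬ p ∣ w₁ * w₂ := by
        rw [hp.dvd_mul]
        rintro (h | h)
        · exact e1 ((Nat.prime_dvd_prime_iff_eq hp h1).mp h)
        · exact e2 ((Nat.prime_dvd_prime_iff_eq hp h2).mp h)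
      rw [geom_fact hr hp hpr hpm, Nat.factorization_eq_zero_of_not_dvd hpm]
      omega

/-- Let `w₁, w₂` be two distinct odd primes, `q` a prime power, and `n` a positive
integer with `gcd(n,q) = 1` and `ord_{rad(n)}(q) = w₁w₂`. If
`1 ≤ v_{w₁}(n) < v_{w₁}(q^{w₁w₂}−1)` and `1 ≤ v_{w₂}(n) < v_{w₂}(q^{w₁w₂}−1)`, then
`gcd(n, q^{w₁w₂}−1) = gcd(n/(w₁w₂), q−1)·gcd(n, (q^{w₁w₂}−1)/(q−1))
= gcd(n/w₂, q^{w₁}−1)·gcd(n, (q^{w₁w₂}−1)/(q^{w₁}−1))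
= gcd(n/w₁, q^{w₂}−1)·gcd(n, (q^{w₁w₂}−1)/(q^{w₂}−1))`. -/
theorem gcd_identities_two_primes_case_four (w₁ w₂ q n : ℕ)
    (hw₁ : w₁.Prime) (hw₁odd : Odd w₁) (hw₂ : w₂.Prime) (hw₂odd : Odd w₂)
    (hne : w₁ ≠ w₂) (hq : IsPrimePow q) (hn : 0 < n) (hcop : Nat.gcd n q = 1)
    (hord : orderOf (q : ZMod (rad n)) = w₁ * w₂)
    (hv₁ : 1 ≤ n.factorization w₁ ∧
      n.factorization w₁ < (q ^ (w₁ * w₂) - 1).factorization w₁)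
    (hv₂ : 1 ≤ n.factorization w₂ ∧
      n.factorization w₂ < (q ^ (w₁ * w₂) - 1).factorization w₂) :
    Nat.gcd n (q ^ (w₁ * w₂) - 1)
        = Nat.gcd (n / (w₁ * w₂)) (q - 1) * Nat.gcd n ((q ^ (w₁ * w₂) - 1) / (q - 1)) ∧
    Nat.gcd n (q ^ (w₁ * w₂) - 1)
        = Nat.gcd (n / w₂) (q ^ w₁ - 1)
          * Nat.gcd n ((q ^ (w₁ * w₂) - 1) / (q ^ w₁ - 1)) ∧
    Nat.gcd n (q ^ (w₁ * w₂) - 1)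
        = Nat.gcd (n / w₁) (q ^ w₂ - 1)
          * Nat.gcd n ((q ^ (w₁ * w₂) - 1) / (q ^ w₂ - 1)) := by
  have hq2 : 2 ≤ q := hq.two_le
  have h1two : w₁ ≠ 2 := by
    have := Nat.odd_iff.mp hw₁odd; omega
  have h2two : w₂ ≠ 2 := by
    have := Nat.odd_iff.mp hw₂odd; omega
  have hn0 : n ≠ 0 := hn.ne'
  have hd1 : w₁ ∣ n := Nat.dvd_of_factorization_pos (by omega)
  have hd2 : w₂ ∣ n := Nat.dvd_of_factorization_pos (by omega)
  have hcop12 : Nat.Coprime w₁ w₂ := (Nat.coprime_primes hw₁ hw₂).mpr hne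
  have hd12 : w₁ * w₂ ∣ n := hcop12.mul_dvd_of_dvd_of_dvd hd1 hd2
  have peq1 : ∀ p : ℕ, p.Prime → p ∣ w₁ * w₂ → p = w₁ ∨ p = w₂ := by
    intro p hp hpd
    rw [hp.dvd_mul] at hpd
    rcases hpd with h | h
    · exact Or.inl ((Nat.prime_dvd_prime_iff_eq hp hw₁).mp h)
    · exact Or.inr ((Nat.prime_dvd_prime_iff_eq hp hw₂).mp h)
  refine ⟨?_, ?_, ?_⟩
  · -- first identity
    apply key_lemma q (w₁ * w₂) n hq2 hn0 hd12
    · intro p hp hpd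
      rcases peq1 p hp hpd with rfl | rfl
      · exact fact_pp hw₁ hw₂ hne
      · rw [mul_comm]; exact fact_pp hw₂ hw₁ (Ne.symm hne)
    · intro p hp hpd
      rcases peq1 p hp hpd with rfl | rfl
      · exact hv₁.2
      · exact hv₂.2
    · exact lte_two hq2 hw₁ hw₁odd hw₂ hw₂odd hne
  · -- second identity
    have hr1 : 2 ≤ q ^ w₁ := le_trans hq2 (Nat.le_self_pow hw₁.pos.ne' q)
    have h := key_lemma (q ^ w₁) w₂ n hr1 hn0 hd2
      (fun p hp hpd => by
        rw [(Nat.prime_dvd_prime_iff_eq hp hw₂).mp hpd]; exact hw₂.factorization_self)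
      (fun p hp hpd => by
        rw [(Nat.prime_dvd_prime_iff_eq hp hw₂).mp hpd, ← pow_mul]; exact hv₂.2)
      (lte_prime hr1 hw₂ hw₂odd)
    rwa [← pow_mul] at h
  · -- third identity
    have hr2 : 2 ≤ q ^ w₂ := le_trans hq2 (Nat.le_self_pow hw₂.pos.ne' q)
    have h := key_lemma (q ^ w₂) w₁ n hr2 hn0 hd1
      (fun p hp hpd => by
        rw [(Nat.prime_dvd_prime_iff_eq hp hw₁).mp hpd]; exact hw₁.factorization_self)
      (fun p hp hpd => by
        rw [(Nat.prime_dvd_prime_iff_eq hp hw₁).mp hpd, ← pow_mul, mul_comm w₂ w₁]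
        exact hv₁.2)
      (lte_prime hr2 hw₁ hw₁odd)
    rwa [← pow_mul, mul_comm w₂ w₁] at h
end
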